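/- (Generalized indirect sum, Walsh transform identity) Let f_i : V_r → ZMod (p^k) for i ∈ (ZMod p)^t be generalized s-plateaued, and let g_0, ..., g_t : V_m → ZMod p be bent functions such that for each j ∈ (ZMod p)^t, G_j := (1 − ∑ j_i) g_0 + ∑ j_i g_i is bent with dual G_j* = (1 − ∑ j_i) g_0* + ∑ j_i g_i* and W_{G_j}(b) = u(b) p^{m/2} ζ_p^{G_j*(b)}, with u : V_m → {±1, ±i} independent of j. Let g : (ZMod p)^t → ZMod (p^k) be arbitrary and define h(x,y) = f_{(g_0(y)−g_1(y), ..., g_0(y)−g_t(y))}(x) + p^{k−1} g_0(y) + g(g_0(y)−g_1(y), ..., g_0(y)−g_t(y)). Then for all (a,b): W_h(a,b) = u(b) p^{m/2} ζ_p^{g_0*(b)} ζ_{p^k}^{g(g_0*(b)−g_1*(b), ..., g_0*(b)−g_t*(b))} · W_{f_{(g_0*(b)−g_1*(b), ..., g_0*(b)−g_t*(b))}}(a). In particular h is a generalized s-plateaued function on V_r × V_m. -/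

import Mathlib

/-- The complex primitive `m`-th root of unity `e^{2πi/m}`. -/
noncomputable def zeta (m : ℕ) : ℂ := Complex.exp (2 * Real.pi * Complex.I / m)

/-- Inner product on `(ZMod p)^n`. -/
def dot {p n : ℕ} (a x : Fin n → ZMod p) : ZMod p := ∑ i, a i * x i

/-- Walsh transform of a generalized p-ary function `f : (ZMod p)^n → ZMod (p^k)`. -/
noncomputable def walsh (p n k : ℕ) [Fact (Nat.Prime p)]
    (f : (Fin n → ZMod p) → ZMod (p ^ k)) (a : Fin n → ZMod p) : ℂ :=
  ∑ x : Fin n → ZMod p, zeta (p ^ k) ^ (f x).val * zeta p ^ ((-(dot a x)).val)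

/-- Walsh transform of a p-ary function on `(ZMod p)^m`. -/
noncomputable def walshP (p m : ℕ) [Fact (Nat.Prime p)]
    (g : (Fin m → ZMod p) → ZMod p) (b : Fin m → ZMod p) : ℂ :=
  ∑ y : Fin m → ZMod p, zeta p ^ (g y).val * zeta p ^ ((-(dot b y)).val)

/-- Walsh transform of a generalized p-ary function on `(ZMod p)^r × (ZMod p)^m`. -/
noncomputable def walsh2 (p r m k : ℕ) [Fact (Nat.Prime p)]
    (h : (Fin r → ZMod p) × (Fin m → ZMod p) → ZMod (p ^ k))
    (a : (Fin r → ZMod p) × (Fin m → ZMod p)) : ℂ :=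
  ∑ x : (Fin r → ZMod p) × (Fin m → ZMod p),
    zeta (p ^ k) ^ (h x).val * zeta p ^ ((-(dot a.1 x.1 + dot a.2 x.2)).val)

noncomputable def E (n : ℕ) (a : ZMod n) : ℂ := zeta n ^ a.val

lemma zeta_prim (n : ℕ) (hn : n ≠ 0) : IsPrimitiveRoot (zeta n) n :=
  Complex.isPrimitiveRoot_exp n hn

lemma zeta_pow_self (n : ℕ) (hn : n ≠ 0) : zeta n ^ n = 1 :=
  (zeta_prim n hn).pow_eq_one

lemma zeta_pow_mod (n : ℕ) (hn : n ≠ 0) (N : ℕ) : zeta n ^ N = zeta n ^ (N % n) := by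
  conv_lhs => rw [← Nat.div_add_mod N n]
  rw [pow_add, pow_mul, zeta_pow_self n hn, one_pow, one_mul]

lemma E_natCast (n : ℕ) (hn : n ≠ 0) (N : ℕ) : E n (N : ZMod n) = zeta n ^ N := by
  haveI : NeZero n := ⟨hn⟩
  rw [E, ZMod.val_natCast, ← zeta_pow_mod n hn]

lemma E_add (n : ℕ) (hn : n ≠ 0) (a b : ZMod n) : E n (a + b) = E n a * E n b := by
  haveI : NeZero n := ⟨hn⟩
  rw [E, ZMod.val_add, ← zeta_pow_mod n hn, pow_add]; rfl

lemma E_zero (n : ℕ) (hn : n ≠ 0) : E n 0 = 1 := by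
  haveI : NeZero n := ⟨hn⟩
  rw [E, ZMod.val_zero, pow_zero]

lemma E_sum (n : ℕ) (hn : n ≠ 0) {ι : Type*} (s : Finset ι) (f : ι → ZMod n) :
    E n (∑ i ∈ s, f i) = ∏ i ∈ s, E n (f i) := by
  induction s using Finset.cons_induction with
  | empty => simpa using E_zero n hn
  | cons i s hi ih => rw [Finset.sum_cons, Finset.prod_cons, E_add n hn, ih]

lemma abs_zeta (n : ℕ) : ‖zeta n‖ = 1 := by
  have : (2 * (Real.pi : ℂ) * Complex.I / (n : ℂ)) = ((2 * Real.pi / n : ℝ) : ℂ) * Complex.I := by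
    push_cast; ring
  rw [zeta, this, Complex.norm_exp_ofReal_mul_I]

lemma sum_E (p : ℕ) [NeZero p] (hp : 1 < p) : ∑ c : ZMod p, E p c = 0 := by
  have h1 : ∑ c : ZMod p, E p c = ∑ i ∈ Finset.range p, zeta p ^ i := by
    refine Finset.sum_nbij' (fun c => ZMod.val c) (fun i => (i : ZMod p)) ?_ ?_ ?_ ?_ ?_
    · intro c _; exact Finset.mem_range.mpr (ZMod.val_lt c)
    · intro i _; exact Finset.mem_univ _
    · intro c _; simp [ZMod.natCast_val, ZMod.cast_id]
    · intro i hi; exact ZMod.val_natCast_of_lt (Finset.mem_range.mp hi)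
    · intro c _; rfl
  rw [h1]
  exact (zeta_prim p (by omega)).geom_sum_eq_zero hp

lemma sum_E_mul (p : ℕ) [Fact (Nat.Prime p)] (d : ZMod p) (hd : d ≠ 0) :
    ∑ c : ZMod p, E p (c * d) = 0 := by
  have hp : 1 < p := (Fact.out : p.Prime).one_lt
  rw [Fintype.sum_bijective (fun c : ZMod p => c * d) (mulRight_bijective₀ d hd)
    (fun c => E p (c * d)) (fun c => E p c) (fun c => rfl)]
  exact sum_E p hp

lemma sum_E_dot (p t : ℕ) [Fact (Nat.Prime p)] (d : Fin t → ZMod p) :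
    ∑ c : Fin t → ZMod p, E p (dot c d) = if d = 0 then ((p : ℂ) ^ t) else 0 := by
  have hp : 1 < p := (Fact.out : p.Prime).one_lt
  have hp0 : p ≠ 0 := by omega
  split_ifs with h
  · subst h
    have : ∀ c : Fin t → ZMod p, E p (dot c 0) = 1 := by
      intro c; simp [dot, E_zero p hp0]
    simp only [this, Finset.sum_const, Finset.card_univ, nsmul_eq_mul, mul_one]
    simp [ZMod.card]
  · have hrw : ∀ c : Fin t → ZMod p, E p (dot c d) = ∏ i, E p (c i * d i) := fun c =>
      E_sum p hp0 _ _
    simp only [hrw]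
    rw [← Fintype.piFinset_univ, Finset.sum_prod_piFinset Finset.univ (fun i y => E p (y * d i))]
    obtain ⟨i0, hi0⟩ : ∃ i, d i ≠ 0 := by
      by_contra hc; push_neg at hc; exact h (funext hc)
    exact Finset.prod_eq_zero (Finset.mem_univ i0) (sum_E_mul p (d i0) hi0)

lemma zeta_pk (p k : ℕ) (hp : 0 < p) (hk : 1 ≤ k) : zeta (p ^ k) ^ (p ^ (k - 1)) = zeta p := by
  rw [zeta, zeta, ← Complex.exp_nat_mul]
  congr 1
  have hpc : (p : ℂ) ≠ 0 := Nat.cast_ne_zero.mpr hp.ne'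
  have hpk : (p : ℂ) ^ k ≠ 0 := pow_ne_zero _ hpc
  have hkk : p ^ k = p ^ (k - 1) * p := by
    rw [← pow_succ]; congr 1; omega
  push_cast [hkk]
  field_simp

lemma delta (p t : ℕ) [Fact (Nat.Prime p)] (F : (Fin t → ZMod p) → ℂ) (e : Fin t → ZMod p) :
    ∑ j : Fin t → ZMod p, F j * ∑ c : Fin t → ZMod p, E p (dot c (e - j)) = (p : ℂ) ^ t * F e := by
  have key : ∀ j : Fin t → ZMod p,
      F j * (∑ c : Fin t → ZMod p, E p (dot c (e - j))) =
        if j = e then (p : ℂ) ^ t * F e else 0 := by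
    intro j
    rw [sum_E_dot]
    split_ifs with h1 h2 h2
    · subst h2; rw [mul_comm]
    · exact absurd (by rw [sub_eq_zero] at h1; exact h1.symm) h2
    · exact absurd (by rw [h2, sub_self]) h1
    · exact mul_zero _
  simp only [key]
  simp

lemma Ek_p (p k : ℕ) [Fact (Nat.Prime p)] (hk : 1 ≤ k) (v : ZMod p) :
    E (p ^ k) ((p : ZMod (p ^ k)) ^ (k - 1) * ((v.val : ℕ) : ZMod (p ^ k))) = E p v := by
  have hp : 1 < p := (Fact.out : p.Prime).one_lt
  have hq : p ^ k ≠ 0 := pow_ne_zero _ (by omega)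
  have hcast : (p : ZMod (p ^ k)) ^ (k - 1) * ((v.val : ℕ) : ZMod (p ^ k)) =
      ((p ^ (k - 1) * v.val : ℕ) : ZMod (p ^ k)) := by push_cast; ring
  rw [hcast, E_natCast _ hq, pow_mul, zeta_pk p k (by omega) hk, E]

lemma ring_id (p t : ℕ) (c : Fin t → ZMod p) (A : ZMod p) (Bv : Fin t → ZMod p) :
    (1 - ∑ i, -(c i)) * A + ∑ i, -(c i) * Bv i = A + dot c (fun i => A - Bv i) := by
  simp only [dot, mul_sub, Finset.sum_sub_distrib, Finset.sum_neg_distrib, neg_mul,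
    sub_neg_eq_add, add_mul, one_mul, Finset.sum_mul]
  ring

lemma dot_sub {p n : ℕ} (c u v : Fin n → ZMod p) : dot c (u - v) = dot c u + -(dot c v) := by
  simp only [dot, Pi.sub_apply, mul_sub, Finset.sum_sub_distrib]
  ring

lemma fiber_calc (p t m : ℕ) [Fact (Nat.Prime p)] (A : (Fin t → ZMod p) → ℂ)
    (B : (Fin m → ZMod p) → ℂ) (jm : (Fin m → ZMod p) → Fin t → ZMod p)
    (js : Fin t → ZMod p) (C : ℂ)
    (hY : ∀ c : Fin t → ZMod p,
      (∑ y : Fin m → ZMod p, E p (dot c (jm y)) * B y) = C * E p (dot c js)) :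
    ∑ y : Fin m → ZMod p, A (jm y) * B y = C * A js := by
  have hp : 1 < p := (Fact.out : p.Prime).one_lt
  have hp0 : p ≠ 0 := by omega
  have hpt : ((p : ℂ)) ^ t ≠ 0 := pow_ne_zero _ (Nat.cast_ne_zero.mpr hp0)
  apply mul_left_cancel₀ hpt
  calc (p : ℂ) ^ t * ∑ y : Fin m → ZMod p, A (jm y) * B y
      = ∑ y : Fin m → ZMod p, ((p : ℂ) ^ t * A (jm y)) * B y := by
        rw [Finset.mul_sum]; exact Finset.sum_congr rfl fun y _ => by ring
    _ = ∑ y : Fin m → ZMod p, (∑ j : Fin t → ZMod p, A j *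
          ∑ c : Fin t → ZMod p, E p (dot c (jm y - j))) * B y := by
        exact Finset.sum_congr rfl fun y _ => by rw [delta p t A (jm y)]
    _ = ∑ y : Fin m → ZMod p, ∑ j : Fin t → ZMod p, ∑ c : Fin t → ZMod p,
          (A j * E p (dot c (jm y - j))) * B y := by
        refine Finset.sum_congr rfl fun y _ => ?_
        simp only [Finset.sum_mul, Finset.mul_sum]
    _ = ∑ j : Fin t → ZMod p, ∑ c : Fin t → ZMod p, ∑ y : Fin m → ZMod p,
          (A j * E p (dot c (jm y - j))) * B y := by
        rw [Finset.sum_comm]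
        exact Finset.sum_congr rfl fun j _ => Finset.sum_comm
    _ = ∑ j : Fin t → ZMod p, ∑ c : Fin t → ZMod p,
          A j * (E p (-(dot c j)) * (C * E p (dot c js))) := by
        refine Finset.sum_congr rfl fun j _ => Finset.sum_congr rfl fun c _ => ?_
        have hterm : ∀ y, (A j * E p (dot c (jm y - j))) * B y =
            (A j * E p (-(dot c j))) * (E p (dot c (jm y)) * B y) := by
          intro y; rw [dot_sub, E_add p hp0]; ring
        rw [Finset.sum_congr rfl fun y _ => hterm y, ← Finset.mul_sum, hY c]; ring
    _ = ∑ j : Fin t → ZMod p, A j * ∑ c : Fin t → ZMod p, C * E p (dot c (js - j)) := by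
        refine Finset.sum_congr rfl fun j _ => ?_
        rw [Finset.mul_sum]
        refine Finset.sum_congr rfl fun c _ => ?_
        rw [dot_sub, E_add p hp0]; ring
    _ = C * ((p : ℂ) ^ t * A js) := by
        have : ∀ j : Fin t → ZMod p, A j * ∑ c : Fin t → ZMod p, C * E p (dot c (js - j)) =
            C * (A j * ∑ c : Fin t → ZMod p, E p (dot c (js - j))) := by
          intro j; rw [← Finset.mul_sum]; ring
        rw [Finset.sum_congr rfl fun j _ => this j, ← Finset.mul_sum, delta p t A js]
    _ = (p : ℂ) ^ t * (C * A js) := by ring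

theorem stmt11 (p k t r m s : ℕ) [Fact (Nat.Prime p)]
    (hk : 1 ≤ k) (ht : 1 ≤ t) (hr : 1 ≤ r) (hm : 1 ≤ m) (hs : s ≤ r)
    (hm2 : p = 2 → Even m) (hrs : p = 2 → k = 1 → Even (r + s))
    (f : (Fin t → ZMod p) → (Fin r → ZMod p) → ZMod (p ^ k))
    (hf : ∀ i a, ‖walsh p r k (f i) a‖ = (p : ℝ) ^ (((r : ℝ) + (s : ℝ)) / 2) ∨
      walsh p r k (f i) a = 0)
    (g0 : Fin (t + 1) → (Fin m → ZMod p) → ZMod p)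
    (gstar : Fin (t + 1) → (Fin m → ZMod p) → ZMod p)
    (u : (Fin m → ZMod p) → ℂ)
    (hu : ∀ b, u b = 1 ∨ u b = -1 ∨ u b = Complex.I ∨ u b = -Complex.I)
    (hG : ∀ (j : Fin t → ZMod p) (b : Fin m → ZMod p),
      walshP p m (fun y => (1 - ∑ i, j i) * g0 0 y + ∑ i : Fin t, j i * g0 i.succ y) b =
        u b * ((p : ℝ) ^ ((m : ℝ) / 2) : ℝ) *
          zeta p ^ (((1 - ∑ i, j i) * gstar 0 b + ∑ i : Fin t, j i * gstar i.succ b).val))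
    (g : (Fin t → ZMod p) → ZMod (p ^ k))
    (h : (Fin r → ZMod p) × (Fin m → ZMod p) → ZMod (p ^ k))
    (hdef : ∀ x y, h (x, y) = f (fun i => g0 0 y - g0 i.succ y) x +
      (p : ZMod (p ^ k)) ^ (k - 1) * (((g0 0 y).val : ℕ) : ZMod (p ^ k)) +
      g (fun i => g0 0 y - g0 i.succ y)) :
    (∀ (a : Fin r → ZMod p) (b : Fin m → ZMod p),
      walsh2 p r m k h (a, b) =
        u b * ((p : ℝ) ^ ((m : ℝ) / 2) : ℝ) * zeta p ^ ((gstar 0 b).val) *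
          zeta (p ^ k) ^ ((g (fun i => gstar 0 b - gstar i.succ b)).val) *
          walsh p r k (f (fun i => gstar 0 b - gstar i.succ b)) a) ∧
    (∀ (a : Fin r → ZMod p) (b : Fin m → ZMod p),
      ‖walsh2 p r m k h (a, b)‖ =
          (p : ℝ) ^ (((r : ℝ) + (m : ℝ) + (s : ℝ)) / 2) ∨
        walsh2 p r m k h (a, b) = 0) := by
  have hp : 1 < p := (Fact.out : Nat.Prime p).one_lt
  have hp0 : p ≠ 0 := by omega
  have hq : p ^ k ≠ 0 := pow_ne_zero _ hp0
  have key : ∀ (a : Fin r → ZMod p) (b : Fin m → ZMod p),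
      walsh2 p r m k h (a, b) =
        u b * ((p : ℝ) ^ ((m : ℝ) / 2) : ℝ) * zeta p ^ ((gstar 0 b).val) *
          zeta (p ^ k) ^ ((g (fun i => gstar 0 b - gstar i.succ b)).val) *
          walsh p r k (f (fun i => gstar 0 b - gstar i.succ b)) a := by
    intro a b
    have step1 : walsh2 p r m k h (a, b) =
        ∑ y : Fin m → ZMod p,
          (walsh p r k (f (fun i => g0 0 y - g0 i.succ y)) a *
              E (p ^ k) (g (fun i => g0 0 y - g0 i.succ y))) *
            (E p (g0 0 y) * E p (-(dot b y))) := by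
      rw [walsh2, Fintype.sum_prod_type, Finset.sum_comm]
      refine Finset.sum_congr rfl fun y _ => ?_
      have hterm : ∀ x : Fin r → ZMod p,
          zeta (p ^ k) ^ (h (x, y)).val * zeta p ^ ((-(dot a x + dot b y)).val) =
          (E (p ^ k) (f (fun i => g0 0 y - g0 i.succ y) x) * E p (-(dot a x))) *
            (E (p ^ k) (g (fun i => g0 0 y - g0 i.succ y)) * (E p (g0 0 y) * E p (-(dot b y)))) := by
        intro x
        have h1 : zeta (p ^ k) ^ (h (x, y)).val = E (p ^ k) (h (x, y)) := rfl
        have h2 : zeta p ^ ((-(dot a x + dot b y)).val) = E p (-(dot a x + dot b y)) := rfl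
        rw [h1, h2, hdef x y, E_add _ hq, E_add _ hq, Ek_p p k hk, neg_add, E_add p hp0]
        ring
      rw [Finset.sum_congr rfl fun x _ => hterm x, ← Finset.sum_mul, ← mul_assoc]
      rfl
    have hY : ∀ c : Fin t → ZMod p,
        (∑ y : Fin m → ZMod p, E p (dot c (fun i => g0 0 y - g0 i.succ y)) *
          (E p (g0 0 y) * E p (-(dot b y)))) =
        (u b * (((p : ℝ) ^ ((m : ℝ) / 2) : ℝ) : ℂ) * E p (gstar 0 b)) *
          E p (dot c (fun i => gstar 0 b - gstar i.succ b)) := by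
      intro c
      have h1 : ∀ y, E p (dot c (fun i => g0 0 y - g0 i.succ y)) *
          (E p (g0 0 y) * E p (-(dot b y))) =
          E p ((1 - ∑ i, -(c i)) * g0 0 y + ∑ i, -(c i) * g0 i.succ y) * E p (-(dot b y)) := by
        intro y
        rw [ring_id p t c (g0 0 y) (fun i => g0 i.succ y), E_add p hp0]
        ring
      calc (∑ y : Fin m → ZMod p, E p (dot c (fun i => g0 0 y - g0 i.succ y)) *
              (E p (g0 0 y) * E p (-(dot b y))))
          = walshP p m (fun y => (1 - ∑ i, -(c i)) * g0 0 y + ∑ i, -(c i) * g0 i.succ y) b := by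
            rw [walshP]
            exact Finset.sum_congr rfl fun y _ => h1 y
        _ = u b * ((p : ℝ) ^ ((m : ℝ) / 2) : ℝ) *
              zeta p ^ (((1 - ∑ i, -(c i)) * gstar 0 b + ∑ i, -(c i) * gstar i.succ b).val) :=
            hG (fun i => -(c i)) b
        _ = (u b * (((p : ℝ) ^ ((m : ℝ) / 2) : ℝ) : ℂ) * E p (gstar 0 b)) *
              E p (dot c (fun i => gstar 0 b - gstar i.succ b)) := by
            have h3 : zeta p ^ (((1 - ∑ i, -(c i)) * gstar 0 b +
                ∑ i, -(c i) * gstar i.succ b).val) =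
                E p ((1 - ∑ i, -(c i)) * gstar 0 b + ∑ i, -(c i) * gstar i.succ b) := rfl
            rw [h3, ring_id p t c (gstar 0 b) (fun i => gstar i.succ b), E_add p hp0]
            ring
    have main := fiber_calc p t m (fun j => walsh p r k (f j) a * E (p ^ k) (g j))
        (fun y => E p (g0 0 y) * E p (-(dot b y))) (fun y i => g0 0 y - g0 i.succ y)
        (fun i => gstar 0 b - gstar i.succ b)
        (u b * (((p : ℝ) ^ ((m : ℝ) / 2) : ℝ) : ℂ) * E p (gstar 0 b)) hY
    rw [step1, main]
    simp only [E]
    ring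
  refine ⟨key, fun a b => ?_⟩
  rcases hf (fun i => gstar 0 b - gstar i.succ b) a with h1 | h2
  · left
    rw [key a b, norm_mul, norm_mul, norm_mul, norm_mul, h1]
    have hub : ‖u b‖ = 1 := by rcases hu b with h'|h'|h'|h' <;> simp [h']
    have hppos : (0:ℝ) < p := by exact_mod_cast Nat.pos_of_ne_zero hp0
    rw [hub, norm_pow, norm_pow, abs_zeta, abs_zeta, one_pow, one_pow,
      Complex.norm_real, Real.norm_of_nonneg (Real.rpow_nonneg hppos.le _),
      one_mul, mul_one, mul_one, ← Real.rpow_add hppos]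
    congr 1; ring
  · right
    rw [key a b, h2, mul_zero]
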